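/- Consider a weighted STV election on {p, a, b} with votes: p ≻ a ≻ b of weight wᵢ for each wᵢ in a multiset W of positive integers with ∑ W = 4K, a vote a ≻ p ≻ b of weight 3K−1, and a vote b ≻ a ≻ p of weight 2K; tie-breaking order a ≻ b ≻ p. Then the W-votes can be replaced by arbitrary orders ranking p above the current winner so that p wins if and only if there exists W' ⊆ W with ∑_{w∈W'} w = K. -/

import Mathlib

/-- The three candidates. -/
inductive Cand : Type
  | p | a | b
deriving DecidableEq

open Cand

/-- Weighted plurality score: total weight of the votes ranking `x` first. -/
def plScore (E : Multiset (ℕ × List Cand)) (x : Cand) : ℕ :=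
  (E.map fun v => if v.2.head? = some x then v.1 else 0).sum

/-- Weighted pairwise margin `D(x,y)`. -/
def marg (E : Multiset (ℕ × List Cand)) (x y : Cand) : ℤ :=
  (E.map fun v => if v.2.idxOf x < v.2.idxOf y then (v.1 : ℤ) else -(v.1 : ℤ)).sum

/-- Tie-breaking order `a ≻ b ≻ p`. -/
def prioABP : Cand → ℕ
  | Cand.a => 0
  | Cand.b => 1
  | Cand.p => 2

/-- `e` is eliminated in the first STV round: `e` has the lowest plurality score,
ties broken by the tie-breaking order (the less preferred candidate is eliminated). -/
def eliminatedFirst (E : Multiset (ℕ × List Cand)) (prio : Cand → ℕ) (e : Cand) : Prop :=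
  ∀ y, y ≠ e → plScore E e < plScore E y ∨ (plScore E e = plScore E y ∧ prio y < prio e)

/-- `x` beats `y` in the weighted pairwise contest, ties broken by the tie-breaking order. -/
def pairBeats (E : Multiset (ℕ × List Cand)) (prio : Cand → ℕ) (x y : Cand) : Prop :=
  0 < marg E x y ∨ (marg E x y = 0 ∧ prio x < prio y)

/-- STV winner for three candidates: some candidate `e` is eliminated first, and `x`
wins the pairwise contest against the other remaining candidate (vote transfers preserve
the pairwise comparison between the two remaining candidates). -/
def stvWins (E : Multiset (ℕ × List Cand)) (prio : Cand → ℕ) (x : Cand) : Prop :=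
  ∃ e, eliminatedFirst E prio e ∧ x ≠ e ∧ ∀ y, y ≠ e → y ≠ x → pairBeats E prio x y

/- ### Auxiliary lemmas -/

lemma listCases (l : List Cand) (hperm : l.Perm [p,a,b]) (hpa : l.idxOf p < l.idxOf a) :
    l = [p,a,b] ∨ l = [p,b,a] ∨ l = [b,p,a] := by
  have h3 : l.length = 3 := hperm.length_eq
  match l, h3 with
  | [x,y,z], _ =>
    cases x <;> cases y <;> cases z <;> revert hperm hpa <;> decide

lemma plScore_add' (E1 E2 : Multiset (ℕ × List Cand)) (x : Cand) :
    plScore (E1 + E2) x = plScore E1 x + plScore E2 x := by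
  simp [plScore]

lemma marg_add' (E1 E2 : Multiset (ℕ × List Cand)) (x y : Cand) :
    marg (E1 + E2) x y = marg E1 x y + marg E2 x y := by
  simp [marg]

lemma plScore_map' (M : Multiset ℕ) (l : List Cand) (x : Cand) :
    plScore (M.map fun w => (w, l)) x = if l.head? = some x then M.sum else 0 := by
  simp only [plScore, Multiset.map_map, Function.comp]
  split_ifs <;> simp [Multiset.map_id']

lemma marg_map' (M : Multiset ℕ) (l : List Cand) (x y : Cand) :
    marg (M.map fun w => (w, l)) x y
      = if l.idxOf x < l.idxOf y then (M.sum : ℤ) else -(M.sum : ℤ) := by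
  simp only [marg, Multiset.map_map, Function.comp]
  split_ifs <;> simp [Multiset.sum_map_neg']

lemma filter_map_sum (V : Multiset (ℕ × List Cand)) (pred : ℕ × List Cand → Prop)
    [DecidablePred pred] :
    ((V.filter pred).map Prod.fst).sum = (V.map fun v => if pred v then v.1 else 0).sum := by
  induction V using Multiset.induction_on with
  | empty => simp
  | cons v V ih => by_cases h : pred v <;> simp [Multiset.filter_cons, h, ih]

lemma sum_map_cast (s : Multiset (ℕ × List Cand)) (f : ℕ × List Cand → ℕ) :
    (s.map fun v => ((f v : ℕ) : ℤ)).sum = ((s.map f).sum : ℤ) := by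
  induction s using Multiset.induction_on with
  | empty => simp
  | cons v s ih => simp only [Multiset.map_cons, Multiset.sum_cons, Nat.cast_add, ih]

/-- STV reduction from `1/4-Partition`: with `W`-votes `p ≻ a ≻ b` (`∑ W = 4К`), a vote
`a ≻ p ≻ b` of weight `3K − 1` and a vote `b ≻ a ≻ p` of weight `2K` (tie-breaking
`a ≻ b ≻ p`; the current winner is `a`), the `W`-votes can be replaced by arbitrary
linear orders ranking `p` above the current winner `a` so that `p` wins the STV election
iff some sub-multiset of `W` sums to exactly `K`. -/
theorem stmt_7 (K : ℕ) (hK : 0 < K) (W : Multiset ℕ)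
    (hpos : ∀ w ∈ W, 0 < w) (hsum : W.sum = 4 * K) :
    (∃ V : Multiset (ℕ × List Cand), V.map Prod.fst = W ∧
      (∀ v ∈ V, v.2.Perm [p, a, b] ∧ v.2.idxOf p < v.2.idxOf a) ∧
      stvWins (V + {(3 * K - 1, [a, p, b]), (2 * K, [b, a, p])}) prioABP p) ↔
    (∃ W' ≤ W, W'.sum = K) := by
  constructor
  · rintro ⟨V, hmap, hv, e, helim, hpe, hbeats⟩
    have hV : ∀ v ∈ V, v.2 = [p,a,b] ∨ v.2 = [p,b,a] ∨ v.2 = [b,p,a] :=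
      fun v hv' => listCases _ (hv v hv').1 (hv v hv').2
    set F : Multiset (ℕ × List Cand) := {(3 * K - 1, [a, p, b]), (2 * K, [b, a, p])} with hF
    -- scores of the V part
    have hA : plScore V a = 0 := by
      apply Multiset.sum_eq_zero
      intro x hx
      rw [Multiset.mem_map] at hx
      obtain ⟨v, hvV, rfl⟩ := hx
      rcases hV v hvV with h | h | h <;> simp [h]
    have hPS : plScore V p + plScore V b = 4 * K := by
      have h1 : plScore V p + plScore V b
          = (V.map fun v => (if v.2.head? = some p then v.1 else 0)
              + if v.2.head? = some b then v.1 else 0).sum :=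
        (Multiset.sum_map_add).symm
      have h2 : (V.map fun v => (if v.2.head? = some p then v.1 else 0)
              + if v.2.head? = some b then v.1 else 0) = V.map Prod.fst :=
        Multiset.map_congr rfl (fun v hvV => by
          rcases hV v hvV with h | h | h <;> simp [h])
      rw [h1, h2, hmap, hsum]
    have hMpa : marg V p a = (4 * K : ℤ) := by
      have h2 : (V.map fun v => if v.2.idxOf p < v.2.idxOf a then (v.1 : ℤ) else -(v.1 : ℤ))
          = V.map fun v => ((v.1 : ℕ) : ℤ) :=
        Multiset.map_congr rfl (fun v hvV => by simp [(hv v hvV).2])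
      rw [marg, h2, sum_map_cast]
      have : V.map (fun v => v.1) = W := hmap
      rw [this, hsum]
      push_cast; ring
    have hMpb : marg V p b = (plScore V p : ℤ) - plScore V b := by
      have h2 : (V.map fun v => if v.2.idxOf p < v.2.idxOf b then (v.1 : ℤ) else -(v.1 : ℤ))
          = V.map fun v => (((if v.2.head? = some p then v.1 else 0 : ℕ)) : ℤ)
              - (((if v.2.head? = some b then v.1 else 0 : ℕ)) : ℤ) :=
        Multiset.map_congr rfl (fun v hvV => by
          rcases hV v hvV with h | h | h <;>
            simp (config := { decide := true }) [h])
      rw [marg, h2, Multiset.sum_map_sub, sum_map_cast, sum_map_cast]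
      rfl
    -- scores of the fixed part
    have hFp : plScore F p = 0 := by simp (config := { decide := true }) [plScore, hF]
    have hFa : plScore F a = 3 * K - 1 := by simp (config := { decide := true }) [plScore, hF]
    have hFb : plScore F b = 2 * K := by simp (config := { decide := true }) [plScore, hF]
    have hFpa : marg F p a = -(((3 * K - 1 : ℕ)) : ℤ) - ((2 * K : ℕ) : ℤ) := by
      simp (config := { decide := true }) [marg, hF]; ring
    have hFpb : marg F p b = (((3 * K - 1 : ℕ)) : ℤ) - ((2 * K : ℕ) : ℤ) := by
      simp (config := { decide := true }) [marg, hF]; ring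
    cases e with
    | p => exact absurd rfl hpe
    | a =>
      -- a eliminated: plScore V b must equal K
      have h1 := helim b (by decide)
      have h2 := helim Cand.p (by decide)
      rw [plScore_add', plScore_add', hA, hFa, hFb] at h1
      rw [plScore_add', plScore_add', hA, hFa, hFp] at h2
      simp only [prioABP] at h1 h2
      have hSb : plScore V b = K := by omega
      refine ⟨(V.filter fun v => v.2.head? = some b).map Prod.fst, ?_, ?_⟩
      · rw [← hmap]
        exact Multiset.map_le_map (Multiset.filter_le _ _)
      · rw [filter_map_sum]
        exact hSb
    | b =>
      -- b eliminated: then p must beat a head-to-head, impossible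
      exfalso
      have hb := hbeats a (by decide) (by decide)
      rcases hb with hb | ⟨hb, hlt⟩
      · rw [marg_add', hMpa, hFpa] at hb
        omega
      · simp [prioABP] at hlt
  · rintro ⟨W', hle, hWs⟩
    have hW2 : W' + (W - W') = W := add_tsub_cancel_of_le hle
    have hsum2 : (W - W').sum = 3 * K := by
      have := congrArg Multiset.sum hW2
      rw [Multiset.sum_add] at this
      omega
    refine ⟨W'.map (fun w => (w, [b,p,a])) + (W - W').map (fun w => (w, [p,a,b])), ?_, ?_, ?_⟩
    · simp only [Multiset.map_add, Multiset.map_map, Function.comp]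
      simpa using hW2
    · intro v hv
      rcases Multiset.mem_add.1 hv with h | h <;>
        obtain ⟨w, hw, rfl⟩ := Multiset.mem_map.1 h
      · exact ⟨show ([b,p,a] : List Cand).Perm [p,a,b] by decide,
          show List.idxOf p ([b,p,a] : List Cand) < List.idxOf a [b,p,a] by decide⟩
      · exact ⟨show ([p,a,b] : List Cand).Perm [p,a,b] by decide,
          show List.idxOf p ([p,a,b] : List Cand) < List.idxOf a [p,a,b] by decide⟩
    · set E : Multiset (ℕ × List Cand) :=
        (W'.map (fun w => (w, [b,p,a])) + (W - W').map (fun w => (w, [p,a,b])))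
          + {(3 * K - 1, [a, p, b]), (2 * K, [b, a, p])} with hE
      have hp : plScore E p = 3 * K := by
        rw [hE, plScore_add', plScore_add', plScore_map', plScore_map']
        simp (config := { decide := true }) [plScore, hsum2]
      have ha : plScore E a = 3 * K - 1 := by
        rw [hE, plScore_add', plScore_add', plScore_map', plScore_map']
        simp (config := { decide := true }) [plScore]
      have hbsc : plScore E b = 3 * K := by
        rw [hE, plScore_add', plScore_add', plScore_map', plScore_map']
        simp (config := { decide := true }) [plScore, hWs]
        omega
      have hpb : marg E p b = 3 * K - 1 := by
        rw [hE, marg_add', marg_add', marg_map', marg_map']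
        simp (config := { decide := true }) [marg, hWs, hsum2]
        omega
      refine ⟨a, ?_, by decide, ?_⟩
      · intro y hy
        cases y with
        | p => left; rw [hp, ha]; omega
        | a => exact absurd rfl hy
        | b => left; rw [hbsc, ha]; omega
      · intro y hy1 hy2
        cases y with
        | p => exact absurd rfl hy2
        | a => exact absurd rfl hy1
        | b =>
          left
          rw [hpb]
          omega
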